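/- arXiv:2006.09567 — 2 statements merged into one kernel-verified Lean document; each statement's English description precedes it below -/
import Mathlib

section
/- Let Ω be a finite set, μ a probability measure on Ω with μ(x) > 0 for every x ∈ Ω, and equip the space of functions f : Ω → ℂ with the weighted inner product ⟨f, g⟩ = ∑_{x∈Ω} μ(x) · conj(f(x)) · g(x). Let A be a linear operator on the subspace H = {f : Ω → ℂ : ∑_x μ(x) f(x) = 0} that is self-adjoint with respect to this inner product, and suppose that for some α > 0 one has α⟨f, A f⟩ ≥ ⟨f, f⟩ for all f ∈ H (scalar Poincaré inequality). Then for every d ≥ 1 and every matrix-valued function F : Ω → ℂ^{d×d} whose every entry (as a scalar function on Ω) lies in H, the Loewner inequality α · ∑_{x∈Ω} μ(x) F(x)* (A F)(x) ⪰ ∑_{x∈Ω} μ(x) F(x)* F(x) holds, where A F is defined by applying A entrywise to F and M ⪰ N means M − N is positive semidefinite. -/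
open Matrix
open scoped ComplexOrder

/-- **Scalar Poincaré implies matrix Poincaré, finite case.**
If `A` is a linear operator on the mean-zero subspace of `Ω → ℂ` (w.r.t. the
strictly positive probability measure `μ`) which is self-adjoint for the
weighted inner product and satisfies the scalar Poincaré inequality
`α⟨f, Af⟩ ≥ ⟨f, f⟩`, then the matrix Poincaré inequality holds for any
matrix-valued function `F` with mean-zero entries. -/
theorem scalar_poincare_implies_matrix_poincare_finite
    {Ω : Type*} [Fintype Ω] (μ : Ω → ℝ)
    (hμpos : ∀ x, 0 < μ x) (hμsum : ∑ x, μ x = 1)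
    (A : (Ω → ℂ) →ₗ[ℂ] (Ω → ℂ))
    (hAmaps : ∀ f : Ω → ℂ, ∑ x, (μ x : ℂ) * f x = 0 → ∑ x, (μ x : ℂ) * A f x = 0)
    (hAsa : ∀ f g : Ω → ℂ, ∑ x, (μ x : ℂ) * f x = 0 → ∑ x, (μ x : ℂ) * g x = 0 →
      ∑ x, (μ x : ℂ) * (starRingEnd ℂ) (A f x) * g x
        = ∑ x, (μ x : ℂ) * (starRingEnd ℂ) (f x) * A g x)
    (α : ℝ) (hα : 0 < α)
    (hpoinc : ∀ f : Ω → ℂ, ∑ x, (μ x : ℂ) * f x = 0 →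
      ∑ x, (μ x : ℂ) * (starRingEnd ℂ) (f x) * f x
        ≤ (α : ℂ) * ∑ x, (μ x : ℂ) * (starRingEnd ℂ) (f x) * A f x)
    (d : ℕ) (hd : 1 ≤ d)
    (F : Ω → Matrix (Fin d) (Fin d) ℂ)
    (hF : ∀ i j, ∑ x, (μ x : ℂ) * F x i j = 0) :
    (α • ∑ x, μ x • ((F x)ᴴ * Matrix.of fun i j => A (fun y => F y i j) x)
      - ∑ x, μ x • ((F x)ᴴ * F x)).PosSemidef := by
  set M₁ : Matrix (Fin d) (Fin d) ℂ :=
    ∑ x, μ x • ((F x)ᴴ * Matrix.of fun i j => A (fun y => F y i j) x) with hM1def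
  set M₂ : Matrix (Fin d) (Fin d) ℂ := ∑ x, μ x • ((F x)ᴴ * F x) with hM2def
  have hM1app : ∀ i j, M₁ i j
      = ∑ x, (μ x : ℂ) * ∑ k, (starRingEnd ℂ) (F x k i) * A (fun y => F y k j) x := by
    intro i j
    simp [hM1def, Matrix.sum_apply, Matrix.mul_apply, Matrix.conjTranspose_apply,
      Complex.real_smul]
  have hM2app : ∀ i j, M₂ i j
      = ∑ x, (μ x : ℂ) * ∑ k, (starRingEnd ℂ) (F x k i) * F x k j := by
    intro i j
    simp [hM2def, Matrix.sum_apply, Matrix.mul_apply, Matrix.conjTranspose_apply,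
      Complex.real_smul]
  -- Hermitian part
  have hM1herm : M₁ᴴ = M₁ := by
    ext i j
    rw [Matrix.conjTranspose_apply, hM1app, hM1app]
    have step1 : ∀ x : Ω,
        star ((μ x : ℂ) * ∑ k, (starRingEnd ℂ) (F x k j) * A (fun y => F y k i) x)
          = ∑ k, (μ x : ℂ) * (starRingEnd ℂ) (A (fun y => F y k i) x) * F x k j := by
      intro x
      simp only [star_mul', star_sum, Complex.star_def, Complex.conj_conj,
        Complex.conj_ofReal, Finset.mul_sum]
      refine Finset.sum_congr rfl fun k _ => ?_
      ring
    calc star (∑ x, (μ x : ℂ) * ∑ k, (starRingEnd ℂ) (F x k j) * A (fun y => F y k i) x)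
        = ∑ k, ∑ x, (μ x : ℂ) * (starRingEnd ℂ) (A (fun y => F y k i) x) * F x k j := by
          rw [star_sum, Finset.sum_congr rfl fun x _ => step1 x, Finset.sum_comm]
      _ = ∑ k, ∑ x, (μ x : ℂ) * (starRingEnd ℂ) (F x k i) * A (fun y => F y k j) x := by
          refine Finset.sum_congr rfl fun k _ => hAsa _ _ (hF k i) (hF k j)
      _ = ∑ x, (μ x : ℂ) * ∑ k, (starRingEnd ℂ) (F x k i) * A (fun y => F y k j) x := by
          rw [Finset.sum_comm]
          refine Finset.sum_congr rfl fun x _ => ?_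
          rw [Finset.mul_sum]
          exact Finset.sum_congr rfl fun k _ => (mul_assoc _ _ _)
  have hM2herm : M₂ᴴ = M₂ := by
    ext i j
    rw [Matrix.conjTranspose_apply, hM2app, hM2app, star_sum]
    refine Finset.sum_congr rfl fun x _ => ?_
    simp only [star_mul', star_sum, Complex.star_def, Complex.conj_conj,
      Complex.conj_ofReal, Finset.mul_sum]
    refine Finset.sum_congr rfl fun k _ => ?_
    ring
  rw [Matrix.posSemidef_iff_dotProduct_mulVec]
  constructor
  · show ((α : ℝ) • M₁ - M₂)ᴴ = _
    rw [Matrix.conjTranspose_sub, Matrix.conjTranspose_smul, hM1herm, hM2herm, star_trivial]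
  · intro v
    set g : Fin d → Ω → ℂ := fun i y => ∑ j, F y i j * v j with hgdef
    have hgmean : ∀ i, ∑ x, (μ x : ℂ) * g i x = 0 := by
      intro i
      calc ∑ x, (μ x : ℂ) * g i x = ∑ x, ∑ j, ((μ x : ℂ) * F x i j) * v j := by
            refine Finset.sum_congr rfl fun x _ => ?_
            rw [hgdef, Finset.mul_sum]
            exact Finset.sum_congr rfl fun j _ => (mul_assoc _ _ _).symm
        _ = ∑ j, (∑ x, (μ x : ℂ) * F x i j) * v j := by
            rw [Finset.sum_comm]
            exact Finset.sum_congr rfl fun j _ => (Finset.sum_mul _ _ _).symm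
        _ = 0 := by simp [hF]
    have hAg : ∀ i x, A (g i) x = ∑ j, A (fun y => F y i j) x * v j := by
      intro i x
      have : g i = ∑ j, v j • (fun y => F y i j) := by
        funext y
        simp [hgdef, smul_eq_mul, mul_comm]
      rw [this, map_sum]
      simp [mul_comm]
    have key : ∀ (C : Matrix (Fin d) (Fin d) ℂ) (x : Ω),
        star v ⬝ᵥ ((μ x • ((F x)ᴴ * C)) *ᵥ v)
          = (μ x : ℂ) * ∑ i, star ((F x *ᵥ v) i) * ((C *ᵥ v) i) := by
      intro C x
      rw [Matrix.smul_mulVec, dotProduct_smul, ← Matrix.mulVec_mulVec,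
        Matrix.dotProduct_mulVec, ← Matrix.star_mulVec]
      simp [dotProduct, Complex.real_smul]
    have dot_sum : ∀ (w : Ω → Matrix (Fin d) (Fin d) ℂ),
        star v ⬝ᵥ ((∑ x, w x) *ᵥ v) = ∑ x, star v ⬝ᵥ (w x *ᵥ v) := by
      intro w
      have mv : (∑ x, w x) *ᵥ v = ∑ x, w x *ᵥ v := by
        ext i
        simp only [Matrix.mulVec, dotProduct, Matrix.sum_apply, Finset.sum_mul,
          Finset.sum_apply]
        rw [Finset.sum_comm]
      rw [mv]
      simp only [dotProduct, Finset.sum_apply, Finset.mul_sum]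
      rw [Finset.sum_comm]
    have hFv : ∀ x i, (F x *ᵥ v) i = g i x := fun x i => rfl
    have hQ1 : star v ⬝ᵥ (M₁ *ᵥ v)
        = ∑ i, ∑ x, (μ x : ℂ) * (starRingEnd ℂ) (g i x) * A (g i) x := by
      rw [hM1def, dot_sum, Finset.sum_congr rfl fun x _ => key _ x]
      have step : ∀ x : Ω, (μ x : ℂ) * ∑ i, star ((F x *ᵥ v) i)
            * (((Matrix.of fun i j => A (fun y => F y i j) x) *ᵥ v) i)
          = ∑ i, (μ x : ℂ) * (starRingEnd ℂ) (g i x) * A (g i) x := by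
        intro x
        rw [Finset.mul_sum]
        refine Finset.sum_congr rfl fun i _ => ?_
        have h1 : ((Matrix.of fun i j => A (fun y => F y i j) x) *ᵥ v) i = A (g i) x := by
          rw [hAg i x]; rfl
        rw [h1, hFv, ← mul_assoc]
        rfl
      rw [Finset.sum_congr rfl fun x _ => step x, Finset.sum_comm]
    have hQ2 : star v ⬝ᵥ (M₂ *ᵥ v)
        = ∑ i, ∑ x, (μ x : ℂ) * (starRingEnd ℂ) (g i x) * g i x := by
      rw [hM2def, dot_sum, Finset.sum_congr rfl fun x _ => key _ x]
      have step : ∀ x : Ω, (μ x : ℂ) * ∑ i, star ((F x *ᵥ v) i) * ((F x *ᵥ v) i)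
          = ∑ i, (μ x : ℂ) * (starRingEnd ℂ) (g i x) * g i x := by
        intro x
        rw [Finset.mul_sum]
        refine Finset.sum_congr rfl fun i _ => ?_
        rw [← mul_assoc]
        rfl
      rw [Finset.sum_congr rfl fun x _ => step x, Finset.sum_comm]
    rw [Matrix.sub_mulVec, dotProduct_sub, Matrix.smul_mulVec,
      dotProduct_smul, hQ1, hQ2, Complex.real_smul, Finset.mul_sum,
      ← Finset.sum_sub_distrib]
    refine Finset.sum_nonneg fun i _ => ?_
    exact sub_nonneg.mpr (hpoinc (g i) (hgmean i))
end

section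
/- Let Ω be a finite set, μ a strictly positive probability measure on Ω, and A a linear operator on H = {f : Ω → ℂ : ∑_x μ(x) f(x) = 0} that is self-adjoint with respect to the weighted inner product ⟨f, g⟩ = ∑_x μ(x) conj(f(x)) g(x), satisfying α⟨f, A f⟩ ≥ ⟨f, f⟩ for all f ∈ H. Then for every d ≥ 1 and every function F : Ω → H_d taking values in the d×d Hermitian matrices, with each entry of F lying in H, one has α · ∑_{x∈Ω} μ(x) F(x) (A F)(x) ⪰ ∑_{x∈Ω} μ(x) F(x)², where A F is defined entrywise. -/
open Matrix
open scoped ComplexOrder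

private lemma dot_sum_smul_mulVec {Ω : Type*} [Fintype Ω] (μ : Ω → ℝ) {d : ℕ}
    (v : Fin d → ℂ) (M : Ω → Matrix (Fin d) (Fin d) ℂ) :
    star v ⬝ᵥ ((∑ x, μ x • M x) *ᵥ v) = ∑ x, (μ x : ℂ) * (star v ⬝ᵥ (M x *ᵥ v)) := by
  simp only [dotProduct, Matrix.mulVec, Matrix.sum_apply, Matrix.smul_apply,
    smul_eq_mul, Complex.real_smul, Finset.sum_mul, Finset.mul_sum]
  calc ∑ i : Fin d, ∑ j : Fin d, ∑ x : Ω, star v i * ((μ x : ℂ) * M x i j * v j)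
      = ∑ i : Fin d, ∑ x : Ω, ∑ j : Fin d, star v i * ((μ x : ℂ) * M x i j * v j) :=
        Finset.sum_congr rfl fun i _ => Finset.sum_comm
    _ = ∑ x : Ω, ∑ i : Fin d, ∑ j : Fin d, star v i * ((μ x : ℂ) * M x i j * v j) :=
        Finset.sum_comm
    _ = ∑ x : Ω, ∑ i : Fin d, ∑ j : Fin d, (μ x : ℂ) * (star v i * (M x i j * v j)) := by
        refine Finset.sum_congr rfl fun x _ => Finset.sum_congr rfl fun i _ =>
          Finset.sum_congr rfl fun j _ => by ring

/-- **Matrix Poincaré for Hermitian-valued functions, finite case.**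
If `A` is self-adjoint on the mean-zero subspace w.r.t. the weighted inner
product given by the strictly positive probability measure `μ` and satisfies
the scalar Poincaré inequality with constant `α`, then for any function `F`
taking Hermitian matrix values with mean-zero entries,
`α ∑ₓ μ(x) F(x)(AF)(x) ⪰ ∑ₓ μ(x) F(x)²`. -/
theorem scalar_poincare_implies_matrix_poincare_hermitian_finite
    {Ω : Type*} [Fintype Ω] (μ : Ω → ℝ)
    (hμpos : ∀ x, 0 < μ x) (hμsum : ∑ x, μ x = 1)
    (A : (Ω → ℂ) →ₗ[ℂ] (Ω → ℂ))
    (hAmaps : ∀ f : Ω → ℂ, ∑ x, (μ x : ℂ) * f x = 0 → ∑ x, (μ x : ℂ) * A f x = 0)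
    (hAsa : ∀ f g : Ω → ℂ, ∑ x, (μ x : ℂ) * f x = 0 → ∑ x, (μ x : ℂ) * g x = 0 →
      ∑ x, (μ x : ℂ) * (starRingEnd ℂ) (A f x) * g x
        = ∑ x, (μ x : ℂ) * (starRingEnd ℂ) (f x) * A g x)
    (α : ℝ) (hα : 0 < α)
    (hpoinc : ∀ f : Ω → ℂ, ∑ x, (μ x : ℂ) * f x = 0 →
      ∑ x, (μ x : ℂ) * (starRingEnd ℂ) (f x) * f x
        ≤ (α : ℂ) * ∑ x, (μ x : ℂ) * (starRingEnd ℂ) (f x) * A f x)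
    (d : ℕ) (hd : 1 ≤ d)
    (F : Ω → Matrix (Fin d) (Fin d) ℂ)
    (hFherm : ∀ x, (F x).IsHermitian)
    (hF : ∀ i j, ∑ x, (μ x : ℂ) * F x i j = 0) :
    (α • ∑ x, μ x • (F x * Matrix.of fun i j => A (fun y => F y i j) x)
      - ∑ x, μ x • (F x * F x)).PosSemidef := by
  set N : Ω → Matrix (Fin d) (Fin d) ℂ :=
    fun x => Matrix.of fun i j => A (fun y => F y i j) x with hNdef
  have hNapp : ∀ x (i j : Fin d), N x i j = A (fun y => F y i j) x := fun _ _ _ => rfl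
  have hFc : ∀ x (i j : Fin d), (starRingEnd ℂ) (F x j i) = F x i j := by
    intro x i j
    have := congrFun (congrFun (hFherm x).eq i) j
    simpa [Matrix.conjTranspose_apply] using this
  have hS1 : (∑ x, μ x • (F x * N x)).IsHermitian := by
    rw [Matrix.IsHermitian]
    ext i j
    simp only [Matrix.conjTranspose_apply, Matrix.sum_apply, Matrix.smul_apply,
      Matrix.mul_apply, Complex.real_smul, star_sum, star_mul', Finset.mul_sum,
      Complex.star_def, _root_.map_mul, Complex.conj_ofReal]
    calc ∑ x, ∑ k, (μ x : ℂ) * ((starRingEnd ℂ) (F x j k) * (starRingEnd ℂ) (N x k i))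
        = ∑ k, ∑ x, (μ x : ℂ) * (starRingEnd ℂ) (A (fun y => F y k i) x) * F x k j := by
          rw [Finset.sum_comm]
          refine Finset.sum_congr rfl fun k _ => Finset.sum_congr rfl fun x _ => ?_
          rw [← hFc x k j, hNapp x k i]; ring
      _ = ∑ k, ∑ x, (μ x : ℂ) * (starRingEnd ℂ) (F x k i) * A (fun y => F y k j) x :=
          Finset.sum_congr rfl fun k _ => hAsa _ _ (hF k i) (hF k j)
      _ = ∑ x, ∑ k, (μ x : ℂ) * (F x i k * N x k j) := by
          rw [Finset.sum_comm]
          refine Finset.sum_congr rfl fun x _ => Finset.sum_congr rfl fun k _ => ?_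
          rw [hFc x i k, hNapp x k j]; ring
  have hS2 : (∑ x, μ x • (F x * F x)).IsHermitian := by
    rw [Matrix.IsHermitian, Matrix.conjTranspose_sum]
    refine Finset.sum_congr rfl fun x _ => ?_
    rw [Matrix.conjTranspose_smul, star_trivial, Matrix.conjTranspose_mul, (hFherm x).eq]
  have hherm : (α • ∑ x, μ x • (F x * N x) - ∑ x, μ x • (F x * F x)).IsHermitian := by
    refine Matrix.IsHermitian.sub ?_ hS2
    rw [Matrix.IsHermitian, Matrix.conjTranspose_smul, star_trivial, hS1.eq]
  refine Matrix.posSemidef_iff_dotProduct_mulVec.mpr ⟨hherm, fun v => ?_⟩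
  set f : Fin d → Ω → ℂ := fun k y => (F y *ᵥ v) k with hfdef
  have hmean : ∀ k, ∑ x, (μ x : ℂ) * f k x = 0 := by
    intro k
    have h1 : ∀ x, (μ x : ℂ) * f k x = ∑ j, ((μ x : ℂ) * F x k j) * v j := by
      intro x
      simp [hfdef, Matrix.mulVec, dotProduct, Finset.mul_sum, mul_assoc]
    rw [Finset.sum_congr rfl fun x _ => h1 x, Finset.sum_comm]
    simp [← Finset.sum_mul, hF]
  have hAf : ∀ k, A (f k) = fun x => (N x *ᵥ v) k := by
    intro k
    have h1 : f k = ∑ j, v j • (fun y => F y k j) := by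
      funext y
      simp [hfdef, Matrix.mulVec, dotProduct, mul_comm]
    rw [h1, map_sum]
    funext x
    simp [Matrix.mulVec, dotProduct, hNapp, mul_comm]
  have hsw : ∀ (M : Matrix (Fin d) (Fin d) ℂ), M.IsHermitian → ∀ w,
      star v ⬝ᵥ (M *ᵥ w) = star (M *ᵥ v) ⬝ᵥ w := by
    intro M hM w
    rw [Matrix.star_mulVec, Matrix.dotProduct_mulVec, hM.eq]
  have hq1 : ∀ x, star v ⬝ᵥ ((F x * N x) *ᵥ v)
      = ∑ k, (starRingEnd ℂ) (f k x) * A (f k) x := by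
    intro x
    rw [← Matrix.mulVec_mulVec, hsw (F x) (hFherm x)]
    refine Finset.sum_congr rfl fun k _ => ?_
    rw [hAf k]
    rfl
  have hq2 : ∀ x, star v ⬝ᵥ ((F x * F x) *ᵥ v)
      = ∑ k, (starRingEnd ℂ) (f k x) * f k x := by
    intro x
    rw [← Matrix.mulVec_mulVec, hsw (F x) (hFherm x)]
    rfl
  have expand : star v ⬝ᵥ ((α • ∑ x, μ x • (F x * N x) - ∑ x, μ x • (F x * F x)) *ᵥ v)
      = (α : ℂ) * (∑ x, (μ x : ℂ) * ∑ k, (starRingEnd ℂ) (f k x) * A (f k) x)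
        - ∑ x, (μ x : ℂ) * ∑ k, (starRingEnd ℂ) (f k x) * f k x := by
    rw [Matrix.sub_mulVec, dotProduct_sub]
    congr 1
    · rw [smul_mulVec, dotProduct_smul, dot_sum_smul_mulVec]
      rw [Finset.sum_congr rfl fun x _ => by rw [hq1 x]]
      rw [Complex.real_smul]
    · rw [dot_sum_smul_mulVec]
      exact Finset.sum_congr rfl fun x _ => by rw [hq2 x]
  rw [expand]
  have swap1 : ∑ x, (μ x : ℂ) * ∑ k, (starRingEnd ℂ) (f k x) * A (f k) x
      = ∑ k, ∑ x, (μ x : ℂ) * (starRingEnd ℂ) (f k x) * A (f k) x := by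
    rw [Finset.sum_comm]
    exact Finset.sum_congr rfl fun x _ => by
      rw [Finset.mul_sum]
      exact Finset.sum_congr rfl fun k _ => (mul_assoc _ _ _).symm
  have swap2 : ∑ x, (μ x : ℂ) * ∑ k, (starRingEnd ℂ) (f k x) * f k x
      = ∑ k, ∑ x, (μ x : ℂ) * (starRingEnd ℂ) (f k x) * f k x := by
    rw [Finset.sum_comm]
    exact Finset.sum_congr rfl fun x _ => by
      rw [Finset.mul_sum]
      exact Finset.sum_congr rfl fun k _ => (mul_assoc _ _ _).symm
  rw [swap1, swap2, Finset.mul_sum, ← Finset.sum_sub_distrib]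
  refine Finset.sum_nonneg fun k _ => ?_
  exact sub_nonneg.mpr (hpoinc (f k) (hmean k))
end
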